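/- Define η₂ = 1/((α_sa/(α_as+α_al))[1 + α_al/(α_ls+α_lc) + α_al α_lc/((α_ls+α_lc)α_cs)]) and ξ₂ = (β_ls α_al/(α_lc+α_ls) + β_cs α_al α_lc/(α_cs(α_lc+α_ls))) / (α_sa[1 + α_al/(α_ls+α_lc) + α_al α_lc/((α_ls+α_lc)α_cs)]). Then C^s = [ρN ξ₂ - 1 - η₂ + √((ρN ξ₂ - 1 - η₂)² + 4ξ₂ρN)] / (2ξ₂[1 + α_cs/α_lc + α_cs(α_lc+α_ls)/(α_al α_lc)]) is positive, and with L^s = (α_cs/α_lc)C^s and A^s = ((α_lc+α_ls)/α_al)L^s, the point (A^s, L^s, C^s) is an equilibrium of subsystem S₂ (the system with Q₁ = 1). -/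

import Mathlib

/-- C^s is positive and (A^s, L^s, C^s) is an equilibrium of
subsystem S₂ (Q₁ = 1). -/
theorem stmt6_Es_equilibrium
    (asa aas aal alc als acs bls bcs ρ N : ℝ)
    (hasa : 0 < asa) (haas : 0 < aas) (haal : 0 < aal) (halc : 0 < alc)
    (hals : 0 < als) (hacs : 0 < acs) (hbls : 0 < bls) (hbcs : 0 < bcs)
    (hρ : 0 < ρ) (hρ1 : ρ < 1) (hN : 0 < N) :
    let η₂ := 1 / ((asa / (aas + aal)) *
      (1 + aal / (als + alc) + aal * alc / ((als + alc) * acs)))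
    let ξ₂ := (bls * aal / (alc + als) + bcs * aal * alc / (acs * (alc + als))) /
      (asa * (1 + aal / (als + alc) + aal * alc / ((als + alc) * acs)))
    let Cs := (ρ * N * ξ₂ - 1 - η₂ +
        Real.sqrt ((ρ * N * ξ₂ - 1 - η₂) ^ 2 + 4 * ξ₂ * ρ * N)) /
      (2 * ξ₂ * (1 + acs / alc + acs * (alc + als) / (aal * alc)))
    let Ls := (acs / alc) * Cs
    let As := ((alc + als) / aal) * Ls
    0 < Cs ∧
    (asa + bls * Ls + bcs * Cs) * (ρ * N - As - Ls - Cs) - (aas + aal) * As = 0 ∧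
    aal * As - (alc + als) * Ls = 0 ∧
    alc * Ls - acs * Cs = 0 := by
  intro η₂ ξ₂ Cs Ls As
  have hηv : η₂ = 1 / ((asa / (aas + aal)) *
      (1 + aal / (als + alc) + aal * alc / ((als + alc) * acs))) := rfl
  have hξv : ξ₂ = (bls * aal / (alc + als) + bcs * aal * alc / (acs * (alc + als))) /
      (asa * (1 + aal / (als + alc) + aal * alc / ((als + alc) * acs))) := rfl
  have hCv : Cs = (ρ * N * ξ₂ - 1 - η₂ +
        Real.sqrt ((ρ * N * ξ₂ - 1 - η₂) ^ 2 + 4 * ξ₂ * ρ * N)) /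
      (2 * ξ₂ * (1 + acs / alc + acs * (alc + als) / (aal * alc))) := rfl
  have hLv : Ls = (acs / alc) * Cs := rfl
  have hAv : As = ((alc + als) / aal) * Ls := rfl
  clear_value η₂ ξ₂ Cs Ls As
  have hξ : 0 < ξ₂ := by rw [hξv]; positivity
  have hη : 0 < η₂ := by rw [hηv]; positivity
  have hK : 0 < 1 + acs / alc + acs * (alc + als) / (aal * alc) := by positivity
  set X := ρ * N * ξ₂ - 1 - η₂ with hX
  set s := Real.sqrt (X ^ 2 + 4 * ξ₂ * ρ * N) with hsdef
  have hsnn : 0 ≤ s := Real.sqrt_nonneg _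
  have hs2 : s ^ 2 = X ^ 2 + 4 * ξ₂ * ρ * N := by
    rw [hsdef, Real.sq_sqrt]; positivity
  clear_value s X
  have hXs : 0 < X + s := by
    nlinarith [mul_pos hξ (mul_pos hρ hN), sq_nonneg (s + X), sq_nonneg (s - X)]
  have hCpos : 0 < Cs := by
    rw [hCv]
    exact div_pos hXs (by positivity)
  refine ⟨hCpos, ?_, ?_, ?_⟩
  · set K := 1 + acs / alc + acs * (alc + als) / (aal * alc) with hKdef
    have hKC : K * Cs = (X + s) / (2 * ξ₂) := by
      rw [hCv]
      field_simp
    have hy : ξ₂ * (K * Cs) ^ 2 - X * (K * Cs) - ρ * N = 0 := by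
      rw [hKC]
      field_simp
      linear_combination hs2
    have hBK : asa * ξ₂ * K = bls * (acs / alc) + bcs := by
      rw [hξv, hKdef]
      field_simp
      ring
    have h1 : bls * Ls + bcs * Cs = asa * ξ₂ * (K * Cs) := by
      rw [hLv]
      linear_combination Cs * hBK.symm
    have h2 : As + Ls + Cs = K * Cs := by
      rw [hAv, hLv, hKdef]
      field_simp
      ring
    have hηK : asa * η₂ * K = (aas + aal) * ((alc + als) / aal) * (acs / alc) := by
      rw [hηv, hKdef]
      field_simp
      ring
    have h3 : (aas + aal) * As = asa * η₂ * (K * Cs) := by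
      rw [hAv, hLv]
      linear_combination Cs * hηK.symm
    linear_combination (ρ * N - (As + Ls + Cs)) * h1 -
      (asa + asa * ξ₂ * (K * Cs)) * h2 - h3 - asa * hy -
      (asa * (K * Cs)) * hX
  · rw [hAv, hLv]; field_simp; ring
  · rw [hLv]; field_simp; ring
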